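/- Let γ₁ > 0 and let 𝐅 be a continuous distribution function on (0,∞) whose survival function 𝐅̄ := 1−𝐅 is everywhere positive and regularly varying at infinity with index −1/γ₁. Let 𝕂 : ℝ → ℝ satisfy: 𝕂 is non-increasing and right-continuous on [0,∞); 𝕂(s) = 0 for s ∉ [0,1) and 𝕂(s) ≥ 0 for s ∈ [0,1); and ∫_ℝ 𝕂(s) ds = 1. Then lim_{u→∞} ∫_u^∞ x^{−1} (𝐅̄(x)/𝐅̄(u)) 𝕂(𝐅̄(x)/𝐅̄(u)) dx = γ₁. -/

import Mathlib

open MeasureTheory Filter Set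

/-- Auxiliary computation: `∫_1^∞ y⁻¹ y^{-1/γ} K(y^{-1/γ}) dy = γ` for a kernel `K`
integrating to `1` and supported on `[0,1)`. -/
lemma aux_kernel_integral (γ : ℝ) (hγ : 0 < γ) (K : ℝ → ℝ)
    (hKmeas : Measurable K)
    (hK_supp : ∀ s ∉ Set.Ico (0 : ℝ) 1, K s = 0)
    (hK_int : ∫ s, K s = 1) :
    ∫ y in Set.Ioi (1 : ℝ), y⁻¹ * y ^ (-1 / γ) * K (y ^ (-1 / γ)) = γ := by
  set p : ℝ := -1 / γ with hp_def
  have hp_neg : p < 0 := div_neg_of_neg_of_pos (by norm_num) hγ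
  have hp_ne : p ≠ 0 := ne_of_lt hp_neg
  have h1 : ∫ y in Set.Ioi (1 : ℝ), y⁻¹ * y ^ p * K (y ^ p)
      = ∫ y in Set.Ioi (1 : ℝ), y ^ (p - 1) * K (y ^ p) := by
    apply setIntegral_congr_fun measurableSet_Ioi
    intro y hy
    have hy0 : (0 : ℝ) < y := lt_trans one_pos hy
    show y⁻¹ * y ^ p * K (y ^ p) = y ^ (p - 1) * K (y ^ p)
    rw [show p - 1 = -1 + p by ring, Real.rpow_add hy0, Real.rpow_neg_one]
  have h2 : ∫ y in Set.Ioi (0 : ℝ), y ^ (p - 1) * K (y ^ p)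
      = ∫ y in Set.Ioi (1 : ℝ), y ^ (p - 1) * K (y ^ p) := by
    apply setIntegral_eq_of_subset_of_forall_diff_eq_zero measurableSet_Ioi
      (Ioi_subset_Ioi zero_le_one)
    intro y hy
    obtain ⟨hy0, hy1⟩ : (0 : ℝ) < y ∧ ¬ (1 : ℝ) < y := ⟨hy.1, hy.2⟩
    have hyp : (1 : ℝ) ≤ y ^ p := by
      have := Real.rpow_le_rpow_of_nonpos hy0 (not_lt.mp hy1) hp_neg.le
      rwa [Real.one_rpow] at this
    rw [hK_supp (y ^ p) (fun hmem => absurd hmem.2 (not_lt.mpr hyp)), mul_zero]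
  have h4 : ∫ y in Set.Ioi (0 : ℝ), K y = 1 := by
    rw [← integral_Ici_eq_integral_Ioi,
      setIntegral_eq_integral_of_forall_compl_eq_zero
        (fun x (hx : x ∉ Set.Ici (0:ℝ)) => hK_supp x (fun hmem => hx hmem.1))]
    exact hK_int
  have h3 := integral_comp_rpow_Ioi K hp_ne
  rw [h4] at h3
  simp only [smul_eq_mul, mul_assoc] at h3
  rw [integral_const_mul] at h3
  have habs : |p| = 1 / γ := by
    rw [abs_of_neg hp_neg, hp_def]; ring
  rw [habs] at h3
  have hX : ∫ y in Set.Ioi (0 : ℝ), y ^ (p - 1) * K (y ^ p) = γ := by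
    have hγ' : (1 : ℝ) / γ ≠ 0 := by positivity
    field_simp at h3
    linarith [h3]
  rw [h1, ← h2, hX]

/-- Limit `(limit-1)` of the paper: for a heavy-tailed df `𝐅` with tail index `γ₁` and a
kernel `𝕂` satisfying `[C1]-[C3]`,
`∫_u^∞ x⁻¹ (𝐅̄(x)/𝐅̄(u)) 𝕂(𝐅̄(x)/𝐅̄(u)) dx → γ₁` as `u → ∞`. -/
theorem kernel_limit_one
    (γ₁ : ℝ) (hγ₁ : 0 < γ₁)
    (F : ℝ → ℝ) (hFmono : Monotone F) (hFcont : Continuous F)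
    (hF0 : ∀ x ≤ (0 : ℝ), F x = 0) (hFtop : Tendsto F atTop (nhds 1))
    (hFbar_pos : ∀ x, F x < 1)
    (hFrv : ∀ x > (0 : ℝ),
      Tendsto (fun z => (1 - F (x * z)) / (1 - F z)) atTop (nhds (x ^ (-1 / γ₁))))
    (K : ℝ → ℝ)
    -- [C1] : non-increasing and right-continuous on [0,∞)
    (hK_anti : AntitoneOn K (Set.Ici 0))
    (hK_rc : ∀ s ∈ Set.Ici (0 : ℝ), ContinuousWithinAt K (Set.Ici s) s)
    -- [C2] : supported on [0,1) and nonnegative there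
    (hK_supp : ∀ s ∉ Set.Ico (0 : ℝ) 1, K s = 0)
    (hK_nonneg : ∀ s ∈ Set.Ico (0 : ℝ) 1, 0 ≤ K s)
    -- [C3] : integrates to one
    (hK_int : ∫ s, K s = 1) :
    Tendsto
      (fun u => ∫ x in Set.Ioi u,
        x⁻¹ * ((1 - F x) / (1 - F u)) * K ((1 - F x) / (1 - F u)))
      atTop (nhds γ₁) := by
  have hFb : ∀ x : ℝ, 0 < 1 - F x := fun x => by linarith [hFbar_pos x]
  set p : ℝ := -1 / γ₁ with hp_def
  have hp_neg : p < 0 := div_neg_of_neg_of_pos (by norm_num) hγ₁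
  have hp_ne : p ≠ 0 := ne_of_lt hp_neg
  -- basic facts about K
  have hK0nonneg : ∀ s, 0 ≤ K s := by
    intro s
    by_cases h : s ∈ Set.Ico (0 : ℝ) 1
    · exact hK_nonneg s h
    · rw [hK_supp s h]
  have hKle : ∀ s, 0 ≤ s → K s ≤ K 0 := fun s hs =>
    hK_anti (mem_Ici.mpr le_rfl) (mem_Ici.mpr hs) hs
  -- antitone extension of K
  set Khat : ℝ → ℝ := fun s => if s < 0 then K 0 else K s with hKhat_def
  have hKhat_anti : Antitone Khat := by
    intro a b hab
    simp only [Khat]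
    by_cases hb : b < 0
    · rw [if_pos hb, if_pos (lt_of_le_of_lt hab hb)]
    · rw [if_neg hb]
      by_cases ha : a < 0
      · rw [if_pos ha]; exact hKle b (not_lt.mp hb)
      · rw [if_neg ha]
        exact hK_anti (mem_Ici.mpr (not_lt.mp ha)) (mem_Ici.mpr (not_lt.mp hb)) hab
  have hKmeas : Measurable K := by
    have hKeq : K = fun s => if s < 0 then 0 else Khat s := by
      funext s
      by_cases h : s < 0
      · rw [if_pos h, hK_supp s (fun hmem => absurd hmem.1 (not_le.mpr h))]
      · rw [if_neg h]; simp only [Khat, if_neg h]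
    rw [hKeq]
    exact Measurable.ite measurableSet_Iio measurable_const hKhat_anti.measurable
  -- the constants c and ρ
  have h2p : (0 : ℝ) < (2 : ℝ) ^ p := Real.rpow_pos_of_pos two_pos p
  have h2p1 : (2 : ℝ) ^ p < 1 := Real.rpow_lt_one_of_one_lt_of_neg one_lt_two hp_neg
  set c : ℝ := ((2 : ℝ) ^ p + 1) / 2 with hc_def
  have hc_pos : 0 < c := by rw [hc_def]; linarith
  have hc_lt1 : c < 1 := by rw [hc_def]; linarith
  have h2pc : (2 : ℝ) ^ p < c := by rw [hc_def]; linarith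
  set ρ : ℝ := -Real.logb 2 c with hρ_def
  have hρ_pos : 0 < ρ := by
    have := Real.logb_neg one_lt_two hc_pos hc_lt1
    rw [hρ_def]; linarith
  have h2ρ : (2 : ℝ) ^ (-ρ) = c := by
    rw [hρ_def, neg_neg]
    exact Real.rpow_logb two_pos (by norm_num) hc_pos
  -- the eventual one-step bound
  have hev : ∀ᶠ z in atTop, (1 - F (2 * z)) / (1 - F z) < c :=
    (hFrv 2 two_pos).eventually_lt_const h2pc
  obtain ⟨u₀, hu₀⟩ := eventually_atTop.mp hev
  set u₁ : ℝ := max u₀ 1 with hu₁_def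
  have hu₁_pos : (0 : ℝ) < u₁ := lt_of_lt_of_le one_pos (le_max_right _ _)
  have hstep : ∀ v, u₁ ≤ v → 1 - F (2 * v) ≤ c * (1 - F v) := fun v hv =>
    le_of_lt ((div_lt_iff₀ (hFb v)).mp (hu₀ v (le_trans (le_max_left _ _) hv)))
  have hiter : ∀ v, u₁ ≤ v → ∀ n : ℕ, 1 - F (2 ^ n * v) ≤ c ^ n * (1 - F v) := by
    intro v hv n
    have hv0 : (0 : ℝ) < v := lt_of_lt_of_le hu₁_pos hv
    induction n with
    | zero => simp
    | succ n ih =>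
      have hvn : u₁ ≤ 2 ^ n * v :=
        le_trans hv (le_mul_of_one_le_left hv0.le (one_le_pow₀ one_le_two))
      have he : (2 : ℝ) ^ (n + 1) * v = 2 * (2 ^ n * v) := by ring
      calc 1 - F (2 ^ (n + 1) * v) = 1 - F (2 * (2 ^ n * v)) := by rw [he]
        _ ≤ c * (1 - F (2 ^ n * v)) := hstep _ hvn
        _ ≤ c * (c ^ n * (1 - F v)) := mul_le_mul_of_nonneg_left ih hc_pos.le
        _ = c ^ (n + 1) * (1 - F v) := by ring
  -- the uniform Potter-type bound
  have hbound : ∀ u, u₁ ≤ u → ∀ y ∈ Set.Ioi (1 : ℝ),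
      (1 - F (u * y)) / (1 - F u) ≤ c⁻¹ * y ^ (-ρ) := by
    intro u hu y hy
    have hy1 : (1 : ℝ) < y := hy
    have hy0 : (0 : ℝ) < y := lt_trans one_pos hy1
    have hu0 : (0 : ℝ) < u := lt_of_lt_of_le hu₁_pos hu
    set n : ℕ := ⌊Real.logb 2 y⌋₊ with hn_def
    have hlogb0 : 0 ≤ Real.logb 2 y := Real.logb_nonneg one_lt_two hy1.le
    have h2n : (2 : ℝ) ^ (n : ℝ) ≤ y := by
      rw [← Real.rpow_logb two_pos (by norm_num) hy0]
      exact Real.rpow_le_rpow_of_exponent_le one_le_two (Nat.floor_le hlogb0)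
    have h2n1 : y ≤ (2 : ℝ) ^ ((n : ℝ) + 1) := by
      rw [← Real.rpow_logb two_pos (by norm_num) hy0]
      exact Real.rpow_le_rpow_of_exponent_le one_le_two
        (le_of_lt (Nat.lt_floor_add_one _))
    have hnum : 1 - F (u * y) ≤ c ^ n * (1 - F u) := by
      have h1 : (2 : ℝ) ^ n * u ≤ u * y := by
        rw [mul_comm u y]
        apply mul_le_mul_of_nonneg_right _ hu0.le
        rw [← Real.rpow_natCast 2 n]; exact h2n
      calc 1 - F (u * y) ≤ 1 - F (2 ^ n * u) := by
            have := hFmono h1; linarith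
        _ ≤ c ^ n * (1 - F u) := hiter u hu n
    have hcn : c ^ n ≤ c⁻¹ * y ^ (-ρ) := by
      have e1 : (2 : ℝ) ^ (((n : ℝ) + 1) * (-ρ)) = c ^ (n + 1 : ℕ) := by
        rw [mul_comm, Real.rpow_mul (by norm_num : (0 : ℝ) ≤ 2), h2ρ,
          ← Real.rpow_natCast c (n + 1)]
        push_cast
        ring_nf
      have h1 : c ^ (n + 1 : ℕ) ≤ y ^ (-ρ) := by
        calc c ^ (n + 1 : ℕ) = ((2 : ℝ) ^ ((n : ℝ) + 1)) ^ (-ρ) := by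
              rw [← e1, ← Real.rpow_mul (by norm_num : (0 : ℝ) ≤ 2)]
          _ ≤ y ^ (-ρ) :=
              Real.rpow_le_rpow_of_nonpos hy0 h2n1 (neg_nonpos.mpr hρ_pos.le)
      have e2 : c ^ n = c⁻¹ * c ^ (n + 1 : ℕ) := by
        rw [pow_succ]; field_simp
      rw [e2]
      exact mul_le_mul_of_nonneg_left h1 (inv_nonneg.mpr hc_pos.le)
    exact le_trans (le_of_le_of_eq ((div_le_iff₀ (hFb u)).mpr hnum) rfl) hcn
  -- notation for the transformed integrand
  set R : ℝ → ℝ → ℝ := fun u y => (1 - F (u * y)) / (1 - F u) with hR_def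
  set G : ℝ → ℝ → ℝ := fun u y => y⁻¹ * R u y * K (R u y) with hG_def
  set φ : ℝ → ℝ := fun y => y⁻¹ * y ^ p * K (y ^ p) with hφ_def
  set bound : ℝ → ℝ := fun y => c⁻¹ * K 0 * y ^ (-1 - ρ) with hbound_def
  -- measurability
  have hGmeas : ∀ u : ℝ, AEStronglyMeasurable (G u) (volume.restrict (Set.Ioi 1)) := by
    intro u
    apply Measurable.aestronglyMeasurable
    have hRm : Measurable (R u) := by
      apply Measurable.div_const
      exact (continuous_const.sub (hFcont.comp (continuous_const.mul continuous_id))).measurable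
    exact (measurable_inv.mul hRm).mul (hKmeas.comp hRm)
  -- integrability of the bound
  have hbound_int : Integrable bound (volume.restrict (Set.Ioi 1)) :=
    (integrableOn_Ioi_rpow_of_lt (by linarith) one_pos).const_mul _
  -- the domination
  have h_bd : ∀ᶠ u in atTop, ∀ᵐ y ∂(volume.restrict (Set.Ioi (1 : ℝ))),
      ‖G u y‖ ≤ bound y := by
    filter_upwards [eventually_ge_atTop u₁] with u hu
    filter_upwards [ae_restrict_mem measurableSet_Ioi] with y hy
    have hy1 : (1 : ℝ) < y := hy
    have hy0 : (0 : ℝ) < y := lt_trans one_pos hy1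
    have hR0 : 0 ≤ R u y := div_nonneg (by linarith [hFbar_pos (u * y)]) (hFb u).le
    have hRle := hbound u hu y hy
    have hG0 : 0 ≤ G u y :=
      mul_nonneg (mul_nonneg (inv_nonneg.mpr hy0.le) hR0) (hK0nonneg _)
    rw [Real.norm_of_nonneg hG0]
    have hle : G u y ≤ y⁻¹ * (c⁻¹ * y ^ (-ρ)) * K 0 := by
      apply mul_le_mul (mul_le_mul_of_nonneg_left hRle (inv_nonneg.mpr hy0.le))
        (hKle _ hR0) (hK0nonneg _)
      positivity
    refine le_trans hle (le_of_eq ?_)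
    show y⁻¹ * (c⁻¹ * y ^ (-ρ)) * K 0 = c⁻¹ * K 0 * y ^ (-1 - ρ)
    rw [show (-1 - ρ : ℝ) = -1 + -ρ by ring, Real.rpow_add hy0, Real.rpow_neg_one]
    ring
  -- the a.e. pointwise convergence
  have h_lim : ∀ᵐ y ∂(volume.restrict (Set.Ioi (1 : ℝ))),
      Tendsto (fun u => G u y) atTop (nhds (φ y)) := by
    set T : Set ℝ := (fun s : ℝ => s ^ p⁻¹) '' {s | ¬ ContinuousAt Khat s} with hT_def
    have hTcount : T.Countable := hKhat_anti.countable_not_continuousAt.image _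
    have hTnull : volume T = 0 := hTcount.measure_zero _
    filter_upwards [ae_restrict_mem measurableSet_Ioi,
      ae_restrict_of_ae (measure_eq_zero_iff_ae_notMem.mp hTnull)] with y hy hyT
    have hy1 : (1 : ℝ) < y := hy
    have hy0 : (0 : ℝ) < y := lt_trans one_pos hy1
    have hyp_pos : 0 < y ^ p := Real.rpow_pos_of_pos hy0 p
    have hcontHat : ContinuousAt Khat (y ^ p) := by
      by_contra h
      apply hyT
      refine ⟨y ^ p, h, ?_⟩
      show (y ^ p) ^ p⁻¹ = y
      rw [← Real.rpow_mul hy0.le, mul_inv_cancel₀ hp_ne, Real.rpow_one]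
    have hcont : ContinuousAt K (y ^ p) := by
      apply hcontHat.congr
      apply eventually_of_mem (Ioi_mem_nhds hyp_pos)
      intro s hs
      simp only [Khat, if_neg (not_lt.mpr (le_of_lt (mem_Ioi.mp hs)))]
    have hRtend : Tendsto (fun u => R u y) atTop (nhds (y ^ p)) := by
      have h := hFrv y (lt_trans one_pos hy1)
      simpa [hR_def, mul_comm] using h
    exact (tendsto_const_nhds.mul hRtend).mul (hcont.tendsto.comp hRtend)
  -- dominated convergence
  have hDCT := tendsto_integral_filter_of_dominated_convergence
    (μ := volume.restrict (Set.Ioi (1 : ℝ))) bound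
    (Eventually.of_forall hGmeas) h_bd hbound_int h_lim
  have hφval : ∫ y in Set.Ioi (1 : ℝ), φ y = γ₁ := by
    rw [hφ_def]
    exact aux_kernel_integral γ₁ hγ₁ K hKmeas hK_supp hK_int
  rw [hφval] at hDCT
  -- substitution x = u * y
  have hsub : ∀ u : ℝ, 0 < u →
      (∫ x in Set.Ioi u, x⁻¹ * ((1 - F x) / (1 - F u)) * K ((1 - F x) / (1 - F u)))
        = ∫ y in Set.Ioi (1 : ℝ), G u y := by
    intro u hu
    have h := integral_comp_mul_left_Ioi
      (fun x => x⁻¹ * ((1 - F x) / (1 - F u)) * K ((1 - F x) / (1 - F u))) 1 hu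
    rw [mul_one] at h
    beta_reduce at h
    have hB : (∫ x in Set.Ioi u, x⁻¹ * ((1 - F x) / (1 - F u)) * K ((1 - F x) / (1 - F u)))
        = u * ∫ y in Set.Ioi (1 : ℝ),
            (u * y)⁻¹ * ((1 - F (u * y)) / (1 - F u)) * K ((1 - F (u * y)) / (1 - F u)) := by
      rw [h, smul_eq_mul, ← mul_assoc, mul_inv_cancel₀ (ne_of_gt hu), one_mul]
    rw [hB, ← integral_const_mul]
    apply setIntegral_congr_fun measurableSet_Ioi
    intro y hy
    have hy0 : (0 : ℝ) < y := lt_trans one_pos hy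
    show u * ((u * y)⁻¹ * ((1 - F (u * y)) / (1 - F u)) * K ((1 - F (u * y)) / (1 - F u)))
        = y⁻¹ * ((1 - F (u * y)) / (1 - F u)) * K ((1 - F (u * y)) / (1 - F u))
    have huy : u * (u * y)⁻¹ = y⁻¹ := by
      rw [mul_inv, ← mul_assoc, mul_inv_cancel₀ (ne_of_gt hu), one_mul]
    rw [← huy]
    ring
  refine Tendsto.congr' ?_ hDCT
  filter_upwards [eventually_gt_atTop 0] with u hu
  exact (hsub u hu).symm
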